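/- Let A, B, and C be model categories, and let F : A ⇄ B : G and L : B ⇄ C : R be Quillen pairs, so that the composite L∘F : A ⇄ C : G∘R is also a Quillen pair. Suppose that (F, G) and (L∘F, G∘R) are Quillen equivalences, that every object of A is cofibrant, and that every object of B is fibrant. Then (L, R) is also a Quillen equivalence; that is, for every cofibrant object X of B, every fibrant object U of C, and every morphism f : L X ⟶ U, f is a weak equivalence in C if and only if its adjunct X ⟶ R U is a weak equivalence in B. -/

import Mathlib

/-!
Statement 1: Given Quillen pairs `F : A ⇄ B : G` and `L : B ⇄ C : R` such that `(F, G)` and the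
composite `(L ∘ F, G ∘ R)` are Quillen equivalences, with every object of `A` cofibrant and
every object of `B` fibrant, the pair `(L, R)` is also a Quillen equivalence.
-/

open CategoryTheory CategoryTheory.Limits

universe v₁ u₁ v₂ u₂ v₃ u₃ v u v' u'

/-- `f` is a retract of `g` in the arrow category. -/
def IsRetractOf {C : Type u} [Category.{v} C] {X Y Z W : C} (f : X ⟶ Y) (g : Z ⟶ W) : Prop :=
  ∃ (i : X ⟶ Z) (r : Z ⟶ X) (i' : Y ⟶ W) (r' : W ⟶ Y),
    i ≫ r = 𝟙 X ∧ i' ≫ r' = 𝟙 Y ∧ i ≫ g = f ≫ i' ∧ g ≫ r' = r ≫ f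

/-- A model structure on a category `C`: three classes of morphisms (weak equivalences,
cofibrations, fibrations) satisfying the usual model category axioms. -/
structure ModelStructure (C : Type u) [Category.{v} C] where
  W : MorphismProperty C
  Cof : MorphismProperty C
  Fib : MorphismProperty C
  W_id : ∀ X : C, W (𝟙 X)
  W_comp : ∀ {X Y Z : C} (f : X ⟶ Y) (g : Y ⟶ Z), W f → W g → W (f ≫ g)
  W_of_comp_left : ∀ {X Y Z : C} (f : X ⟶ Y) (g : Y ⟶ Z), W f → W (f ≫ g) → W g
  W_of_comp_right : ∀ {X Y Z : C} (f : X ⟶ Y) (g : Y ⟶ Z), W g → W (f ≫ g) → W f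
  W_retract : ∀ {X Y Z W' : C} (f : X ⟶ Y) (g : Z ⟶ W'), IsRetractOf f g → W g → W f
  Cof_retract : ∀ {X Y Z W' : C} (f : X ⟶ Y) (g : Z ⟶ W'), IsRetractOf f g → Cof g → Cof f
  Fib_retract : ∀ {X Y Z W' : C} (f : X ⟶ Y) (g : Z ⟶ W'), IsRetractOf f g → Fib g → Fib f
  lift_cof_trivFib : ∀ {A B X Y : C} (i : A ⟶ B) (p : X ⟶ Y),
    Cof i → Fib p → W p → HasLiftingProperty i p
  lift_trivCof_fib : ∀ {A B X Y : C} (i : A ⟶ B) (p : X ⟶ Y),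
    Cof i → W i → Fib p → HasLiftingProperty i p
  fact_cof_trivFib : ∀ {X Y : C} (f : X ⟶ Y),
    ∃ (Z : C) (i : X ⟶ Z) (p : Z ⟶ Y), Cof i ∧ Fib p ∧ W p ∧ i ≫ p = f
  fact_trivCof_fib : ∀ {X Y : C} (f : X ⟶ Y),
    ∃ (Z : C) (i : X ⟶ Z) (p : Z ⟶ Y), Cof i ∧ W i ∧ Fib p ∧ i ≫ p = f

/-- A Quillen pair: the left adjoint preserves cofibrations and trivial cofibrations. -/
def IsQuillenPair {C : Type u} [Category.{v} C] {D : Type u'} [Category.{v'} D]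
    (MC : ModelStructure C) (MD : ModelStructure D) (F : C ⥤ D) : Prop :=
  (∀ {X Y : C} (f : X ⟶ Y), MC.Cof f → MD.Cof (F.map f)) ∧
  (∀ {X Y : C} (f : X ⟶ Y), MC.Cof f → MC.W f → MD.Cof (F.map f) ∧ MD.W (F.map f))

/-- A Quillen pair is a Quillen equivalence if for every cofibrant `X` and fibrant `Y`,
a map `F X ⟶ Y` is a weak equivalence iff its adjunct `X ⟶ G Y` is. -/
def IsQuillenEquivalence {C : Type u} [Category.{v} C] {D : Type u'} [Category.{v'} D]
    [HasInitial C] [HasTerminal D]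
    (MC : ModelStructure C) (MD : ModelStructure D)
    {F : C ⥤ D} {G : D ⥤ C} (adj : F ⊣ G) : Prop :=
  ∀ (X : C) (Y : D), MC.Cof (initial.to X) → MD.Fib (terminal.from Y) →
    ∀ f : F.obj X ⟶ Y, MD.W f ↔ MC.W (adj.homEquiv X Y f)

section Aux

open CategoryTheory CategoryTheory.Limits

variable {D : Type u} [Category.{v} D]

/-- If `g` has the left lifting property against all trivial fibrations, it is a cofibration. -/
lemma cof_of_llp (M : ModelStructure D) {X Y : D} (g : X ⟶ Y)
    (h : ∀ {P Q : D} (p : P ⟶ Q), M.Fib p → M.W p → HasLiftingProperty g p) : M.Cof g := by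
  obtain ⟨Z, c, p, hc, hpF, hpW, hfac⟩ := M.fact_cof_trivFib g
  haveI := h p hpF hpW
  have sq : CommSq c g p (𝟙 Y) := ⟨by simp [hfac]⟩
  exact M.Cof_retract g c ⟨𝟙 X, 𝟙 X, sq.lift, p,
    by simp, sq.fac_right, by simpa using sq.fac_left.symm, by simp [hfac]⟩ hc

lemma cof_comp (M : ModelStructure D) {X Y Z : D} {i : X ⟶ Y} {j : Y ⟶ Z}
    (hi : M.Cof i) (hj : M.Cof j) : M.Cof (i ≫ j) := by
  apply cof_of_llp M
  intro P Q p hpF hpW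
  haveI := M.lift_cof_trivFib i p hi hpF hpW
  haveI := M.lift_cof_trivFib j p hj hpF hpW
  infer_instance

lemma cof_inl (M : ModelStructure D) [HasInitial D] [HasBinaryCoproducts D] {X Y : D}
    (hY : M.Cof (initial.to Y)) : M.Cof (coprod.inl : X ⟶ X ⨿ Y) := by
  apply cof_of_llp M
  intro P Q p hpF hpW
  constructor
  intro t b sq
  haveI := M.lift_cof_trivFib (initial.to Y) p hY hpF hpW
  have sq2 : CommSq (initial.to P) (initial.to Y) p (coprod.inr ≫ b) :=
    ⟨initial.hom_ext _ _⟩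
  exact CommSq.HasLift.mk'
    { l := coprod.desc t sq2.lift
      fac_left := by simp [coprod.inl_desc]
      fac_right := by
        apply coprod.hom_ext
        · simpa [coprod.inl_desc] using sq.w
        · simpa [coprod.inr_desc] using sq2.fac_right }

lemma cof_inr (M : ModelStructure D) [HasInitial D] [HasBinaryCoproducts D] {X Y : D}
    (hX : M.Cof (initial.to X)) : M.Cof (coprod.inr : Y ⟶ X ⨿ Y) := by
  apply cof_of_llp M
  intro P Q p hpF hpW
  constructor
  intro t b sq
  haveI := M.lift_cof_trivFib (initial.to X) p hX hpF hpW
  have sq2 : CommSq (initial.to P) (initial.to X) p (coprod.inl ≫ b) :=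
    ⟨initial.hom_ext _ _⟩
  exact CommSq.HasLift.mk'
    { l := coprod.desc sq2.lift t
      fac_left := by simp [coprod.inr_desc]
      fac_right := by
        apply coprod.hom_ext
        · simpa [coprod.inl_desc] using sq2.fac_right
        · simpa [coprod.inr_desc] using sq.w }

/-- Ken Brown's lemma: a left Quillen functor preserves weak equivalences between
cofibrant objects. -/
lemma kenBrown {E : Type u'} [Category.{v'} E] [HasInitial D] [HasBinaryCoproducts D]
    (MD : ModelStructure D) (ME : ModelStructure E) {L : D ⥤ E}
    (hL : IsQuillenPair MD ME L) {X Y : D} (w : X ⟶ Y) (hw : MD.W w)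
    (hX : MD.Cof (initial.to X)) (hY : MD.Cof (initial.to Y)) : ME.W (L.map w) := by
  obtain ⟨Z, j, p, hj, hpF, hpW, hfac⟩ := MD.fact_cof_trivFib (coprod.desc w (𝟙 Y))
  have hj1p : (coprod.inl ≫ j) ≫ p = w := by rw [Category.assoc, hfac]; simp [coprod.inl_desc]
  have hj2p : (coprod.inr ≫ j) ≫ p = 𝟙 Y := by rw [Category.assoc, hfac]; simp [coprod.inr_desc]
  have hj1C : MD.Cof (coprod.inl ≫ j) := cof_comp MD (cof_inl MD hY) hj
  have hj2C : MD.Cof (coprod.inr ≫ j) := cof_comp MD (cof_inr MD hX) hj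
  have hj1W : MD.W (coprod.inl ≫ j) :=
    MD.W_of_comp_right _ p hpW (by rw [hj1p]; exact hw)
  have hj2W : MD.W (coprod.inr ≫ j) :=
    MD.W_of_comp_right _ p hpW (by rw [hj2p]; exact MD.W_id Y)
  obtain ⟨-, hLj1W⟩ := hL.2 _ hj1C hj1W
  obtain ⟨-, hLj2W⟩ := hL.2 _ hj2C hj2W
  have hLpW : ME.W (L.map p) := by
    refine ME.W_of_comp_left (L.map (coprod.inr ≫ j)) (L.map p) hLj2W ?_
    rw [← L.map_comp, hj2p, L.map_id]
    exact ME.W_id _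
  have : L.map w = L.map (coprod.inl ≫ j) ≫ L.map p := by rw [← L.map_comp, hj1p]
  rw [this]
  exact ME.W_comp _ _ hLj1W hLpW

end Aux

theorem quillen_equivalence_of_comp
    {A : Type u₁} [Category.{v₁} A] {B : Type u₂} [Category.{v₂} B] {C : Type u₃} [Category.{v₃} C]
    [HasLimits A] [HasColimits A] [HasLimits B] [HasColimits B] [HasLimits C] [HasColimits C]
    [HasInitial A] [HasTerminal A] [HasInitial B] [HasTerminal B] [HasInitial C] [HasTerminal C]
    (MA : ModelStructure A) (MB : ModelStructure B) (MC : ModelStructure C)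
    {F : A ⥤ B} {G : B ⥤ A} (adjFG : F ⊣ G)
    {L : B ⥤ C} {R : C ⥤ B} (adjLR : L ⊣ R)
    (hFG : IsQuillenPair MA MB F) (hLR : IsQuillenPair MB MC L)
    (hFGequiv : IsQuillenEquivalence MA MB adjFG)
    (hLFequiv : IsQuillenEquivalence MA MC (adjFG.comp adjLR))
    (hcofA : ∀ X : A, MA.Cof (initial.to X))
    (hfibB : ∀ Y : B, MB.Fib (terminal.from Y)) :
    IsQuillenEquivalence MB MC adjLR := by
  intro X U hX hU f
  set ε : F.obj (G.obj X) ⟶ X := adjFG.counit.app X with hε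
  -- any two maps out of F(⊥_A) agree
  have hsub : ∀ (Z : B) (h₁ h₂ : F.obj (⊥_ A) ⟶ Z), h₁ = h₂ := fun Z h₁ h₂ =>
    (adjFG.homEquiv _ _).injective (initial.hom_ext _ _)
  -- F(G X) is cofibrant
  have hFGXcof : MB.Cof (initial.to (F.obj (G.obj X))) := by
    refine MB.Cof_retract _ (F.map (initial.to (G.obj X)))
      ⟨initial.to _, (adjFG.homEquiv _ _).symm (initial.to (G.obj (⊥_ B))), 𝟙 _, 𝟙 _,
        initial.hom_ext _ _, by simp, initial.hom_ext _ _, hsub _ _ _⟩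
      (hFG.1 _ (hcofA _))
  -- the counit is a weak equivalence
  have hεadj : adjFG.homEquiv (G.obj X) X ε = 𝟙 (G.obj X) := by
    rw [hε, Adjunction.homEquiv_unit]
    simp
  have hεW : MB.W ε := by
    rw [hFGequiv (G.obj X) X (hcofA _) (hfibB _) ε, hεadj]
    exact MA.W_id _
  have hLεW : MC.W (L.map ε) := kenBrown MB MC hLR ε hεW hFGXcof hX
  set fb := adjLR.homEquiv X U f with hfb
  have key : (adjFG.comp adjLR).homEquiv (G.obj X) U (L.map ε ≫ f) = G.map fb := by
    rw [Adjunction.comp_homEquiv]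
    show adjFG.homEquiv _ _ (adjLR.homEquiv _ _ (L.map ε ≫ f)) = G.map fb
    rw [adjLR.homEquiv_naturality_left, adjFG.homEquiv_naturality_right, ← hfb, hεadj,
      Category.id_comp]
  have h1 : MC.W (L.map ε ≫ f) ↔ MA.W (G.map fb) := by
    have := hLFequiv (G.obj X) U (hcofA _) hU (L.map ε ≫ f)
    rwa [key] at this
  have h2 : MC.W f ↔ MC.W (L.map ε ≫ f) :=
    ⟨fun h => MC.W_comp _ _ hLεW h, fun h => MC.W_of_comp_left (L.map ε) f hLεW h⟩
  have h3 : MB.W fb ↔ MB.W (ε ≫ fb) :=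
    ⟨fun h => MB.W_comp _ _ hεW h, fun h => MB.W_of_comp_left ε fb hεW h⟩
  have h4 : MB.W (ε ≫ fb) ↔ MA.W (G.map fb) := by
    have := hFGequiv (G.obj X) (R.obj U) (hcofA _) (hfibB _) (ε ≫ fb)
    rwa [adjFG.homEquiv_naturality_right, hεadj, Category.id_comp] at this
  exact (h2.trans h1).trans ((h3.trans h4).symm)
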